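/- Let R be a (not necessarily unital, associative) ring. Then R has a multiplicative identity if and only if there exists a bijection Ψ : R → R satisfying Ψ(a − b + c) = Ψ(a) − Ψ(b) + Ψ(c) and Ψ(a·b + a + b) = Ψ(a)·Ψ(b) for all a, b, c ∈ R (i.e., the truss T(id,0) with product a ⋄ b = a·b + a + b is isomorphic to the truss T(R) with product a·b). -/

import Mathlib

/-- A non-unital ring `R` has a multiplicative identity iff the truss
`T(id,0)` with product `a ⋄ b = a·b + a + b` is isomorphic to the truss `T(R)`
with the ring product, i.e. there is a bijection `Ψ : R → R` preserving the heap
bracket with `Ψ(a·b + a + b) = Ψ(a)·Ψ(b)`. -/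
theorem has_identity_iff_truss_iso {R : Type*} [NonUnitalRing R] :
    (∃ u : R, ∀ a : R, u * a = a ∧ a * u = a)
      ↔ (∃ Ψ : R → R, Function.Bijective Ψ ∧
          (∀ a b c : R, Ψ (a - b + c) = Ψ a - Ψ b + Ψ c) ∧
          (∀ a b : R, Ψ (a * b + a + b) = Ψ a * Ψ b)) := by
  constructor
  · rintro ⟨u, hu⟩
    refine ⟨fun a => a + u, ⟨fun a b h => by simpa using h,
      fun b => ⟨b - u, sub_add_cancel b u⟩⟩, fun a b c => by dsimp only; abel, fun a b => ?_⟩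
    have h1 := (hu b).1
    have h2 := (hu a).2
    have h3 := (hu u).1
    simp only [mul_add, add_mul, h1, h2, h3]
    abel
  · rintro ⟨Ψ, hbij, hheap, hmul⟩
    refine ⟨Ψ 0, fun x => ?_⟩
    obtain ⟨a, rfl⟩ := hbij.2 x
    constructor
    · have := hmul 0 a
      simpa using this.symm
    · have := hmul a 0
      simpa using this.symm
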